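/- arXiv:2510.21001 — 2 statements merged into one kernel-verified Lean document; each statement's English description precedes it below -/
import Mathlib

section
/- Let K be a real valued field, I ⊂ K{x}^N a submodule and S = {f_1,…,f_m} a standard basis of I with respect to a local degree ordering. Then for every f ∈ K{x}^N one has f ∈ I if and only if NF(f|S) = 0. -/
open MvPowerSeries Finsupp ENNReal

namespace GrauertRVF

variable {K : Type} [Field K]

/-- total degree of a multi-exponent -/
def deg {σ : Type} (d : σ →₀ ℕ) : ℕ := d.sum fun _ k => k

/-- the `ε`-norm `‖f‖_ε = Σ_d |c_d| ε^d` of a formal power series (value in `ℝ≥0∞`). -/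
noncomputable def wnorm {σ : Type} [Fintype σ] (abv : AbsoluteValue K ℝ) (ε : σ → ℝ)
    (f : MvPowerSeries σ K) : ℝ≥0∞ :=
  ∑' d : σ →₀ ℕ, ENNReal.ofReal (abv (MvPowerSeries.coeff (R := K) d f) * ∏ i, ε i ^ d i)

/-- the `ε`-norm of a vector of formal power series. -/
noncomputable def vnorm {σ : Type} [Fintype σ] {N : ℕ} (abv : AbsoluteValue K ℝ) (ε : σ → ℝ)
    (f : Fin N → MvPowerSeries σ K) : ℝ≥0∞ :=
  ∑ k, wnorm abv ε (f k)

/-- `f` is a convergent power series. -/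
def IsConv {σ : Type} [Fintype σ] (abv : AbsoluteValue K ℝ) (f : MvPowerSeries σ K) : Prop :=
  ∃ ε : σ → ℝ, (∀ i, 0 < ε i) ∧ wnorm abv ε f < ⊤

/-- `f` is a convergent vector of power series. -/
def IsConvV {σ : Type} [Fintype σ] {N : ℕ} (abv : AbsoluteValue K ℝ) (f : Fin N → MvPowerSeries σ K) : Prop :=
  ∃ ε : σ → ℝ, (∀ i, 0 < ε i) ∧ vnorm abv ε f < ⊤

/-- `x^α > x^β` in the local degree ordering deglex. -/
def MonGT {n : ℕ} (α β : Fin n →₀ ℕ) : Prop :=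
  deg α < deg β ∨ (deg α = deg β ∧ ∃ l : Fin n, (∀ j : Fin n, j < l → α j = β j) ∧ α l < β l)

/-- module monomial ordering: `x^α e_i > x^β e_j` iff `x^α > x^β`, or `α = β` and `i < j`. -/
def MMonGT {n N : ℕ} (p q : (Fin n →₀ ℕ) × Fin N) : Prop :=
  MonGT p.1 q.1 ∨ (p.1 = q.1 ∧ p.2 < q.2)

/-- `x^α e_i` divides `x^β e_j` iff `i = j` and `x^α ∣ x^β`. -/
def MMonDvd {n N : ℕ} (p q : (Fin n →₀ ℕ) × Fin N) : Prop :=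
  p.2 = q.2 ∧ p.1 ≤ q.1

/-- `p` is the leading monomial of the vector `f` of power series. -/
def IsLM {n N : ℕ} (f : Fin N → MvPowerSeries (Fin n) K) (p : (Fin n →₀ ℕ) × Fin N) : Prop :=
  MvPowerSeries.coeff (R := K) p.1 (f p.2) ≠ 0 ∧
    ∀ q : (Fin n →₀ ℕ) × Fin N, MvPowerSeries.coeff (R := K) q.1 (f q.2) ≠ 0 → q = p ∨ MMonGT p q

/-- `α` is the leading monomial of the power series `f`. -/
def IsLM1 {n : ℕ} (f : MvPowerSeries (Fin n) K) (α : Fin n →₀ ℕ) : Prop :=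
  MvPowerSeries.coeff (R := K) α f ≠ 0 ∧
    ∀ β : Fin n →₀ ℕ, MvPowerSeries.coeff (R := K) β f ≠ 0 → β = α ∨ MonGT α β

/-- the tail `f - LT(f)` of `f`, where `p` is the leading monomial of `f`. -/
noncomputable def tailOf {n N : ℕ} (f : Fin N → MvPowerSeries (Fin n) K)
    (p : (Fin n →₀ ℕ) × Fin N) : Fin N → MvPowerSeries (Fin n) K :=
  fun k => if k = p.2 then
    f k - (MvPowerSeries.monomial (R := K) p.1) (MvPowerSeries.coeff (R := K) p.1 (f k)) else f k

/-- formal substitution: `subst Φ f = f(Φ)`; meaningful when each `Φ j` has zero constant term. -/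
noncomputable def subst {σ τ : Type} [Fintype σ] [DecidableEq σ] [Fintype τ] [DecidableEq τ]
    (Φ : σ → MvPowerSeries τ K) (f : MvPowerSeries σ K) : MvPowerSeries τ K :=
  fun e => ∑ d ∈ Finset.Iic (Finsupp.equivFunOnFinite.symm fun _ : σ => deg e),
    MvPowerSeries.coeff (R := K) d f * MvPowerSeries.coeff (R := K) e (∏ j, Φ j ^ d j)

/-- every monomial of `f` has total degree at least `l`, i.e. `f ∈ 𝔪^l`. -/
def OrderGE {σ : Type} [Fintype σ] (l : ℕ) (f : MvPowerSeries σ K) : Prop :=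
  ∀ d, MvPowerSeries.coeff (R := K) d f ≠ 0 → l ≤ deg d

/-- formal partial derivative `∂f/∂x_i`. -/
noncomputable def pd {n : ℕ} (i : Fin n) (f : MvPowerSeries (Fin n) K) :
    MvPowerSeries (Fin n) K :=
  fun d => (((d i) + 1 : ℕ) : K) * MvPowerSeries.coeff (R := K) (d + Finsupp.single i 1) f

/-- the Hessian matrix `(∂²f/∂x_i∂x_j(0))`. -/
noncomputable def hess {n : ℕ} (f : MvPowerSeries (Fin n) K) : Matrix (Fin n) (Fin n) K :=
  Matrix.of fun i j => if i = j then 2 * MvPowerSeries.coeff (R := K) (Finsupp.single i 2) f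
    else MvPowerSeries.coeff (R := K) (Finsupp.single i 1 + Finsupp.single j 1) f

/-- right equivalence: `g = φ(f)` for a `K`-algebra automorphism `φ` of `K{x}`,
given by a convergent coordinate change `Φ` with zero constant terms and
invertible linear part. -/
def RightEquiv {n : ℕ} (abv : AbsoluteValue K ℝ) (f g : MvPowerSeries (Fin n) K) : Prop :=
  ∃ Φ : Fin n → MvPowerSeries (Fin n) K,
    (∀ i, IsConv abv (Φ i)) ∧
    (∀ i, MvPowerSeries.constantCoeff (σ := Fin n) (R := K) (Φ i) = 0) ∧
    (Matrix.of fun i j => MvPowerSeries.coeff (R := K) (Finsupp.single j 1) (Φ i)).det ≠ 0 ∧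
    subst Φ f = g

/-- contact equivalence: `g = u·φ(f)` for an automorphism `φ` and a unit `u` of `K{x}`. -/
def ContactEquiv {n : ℕ} (abv : AbsoluteValue K ℝ) (f g : MvPowerSeries (Fin n) K) : Prop :=
  ∃ (Φ : Fin n → MvPowerSeries (Fin n) K) (u : MvPowerSeries (Fin n) K),
    (∀ i, IsConv abv (Φ i)) ∧
    (∀ i, MvPowerSeries.constantCoeff (σ := Fin n) (R := K) (Φ i) = 0) ∧
    (Matrix.of fun i j => MvPowerSeries.coeff (R := K) (Finsupp.single j 1) (Φ i)).det ≠ 0 ∧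
    IsConv abv u ∧ MvPowerSeries.constantCoeff (σ := Fin n) (R := K) u ≠ 0 ∧
    u * subst Φ f = g

/-- the `x`-part of a mixed exponent. -/
noncomputable def xpart {n q : ℕ} (d : (Fin n ⊕ Fin q) →₀ ℕ) : Fin n →₀ ℕ :=
  Finsupp.equivFunOnFinite.symm fun i => d (Sum.inl i)

/-- the `s`-part of a mixed exponent. -/
noncomputable def spart {n q : ℕ} (d : (Fin n ⊕ Fin q) →₀ ℕ) : Fin q →₀ ℕ :=
  Finsupp.equivFunOnFinite.symm fun j => d (Sum.inr j)

/-- the degree in the second block of variables. -/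
def sdeg {n q : ℕ} (d : (Fin n ⊕ Fin q) →₀ ℕ) : ℕ := ∑ j : Fin q, d (Sum.inr j)

/-- `g` involves only the first block of variables. -/
def OnlyX {n q : ℕ} (g : MvPowerSeries (Fin n ⊕ Fin q) K) : Prop :=
  ∀ d, MvPowerSeries.coeff (R := K) d g ≠ 0 → ∀ j : Fin q, d (Sum.inr j) = 0

/-- `g` involves only the second block of variables. -/
def OnlyS {n q : ℕ} (g : MvPowerSeries (Fin n ⊕ Fin q) K) : Prop :=
  ∀ d, MvPowerSeries.coeff (R := K) d g ≠ 0 → ∀ i : Fin n, d (Sum.inl i) = 0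

/-- `g` is homogeneous of degree `e` in the second block of variables. -/
def SHomog {n q : ℕ} (e : ℕ) (g : MvPowerSeries (Fin n ⊕ Fin q) K) : Prop :=
  ∀ d, MvPowerSeries.coeff (R := K) d g ≠ 0 → sdeg d = e

/-- `g` is a polynomial of degree `≤ e` in the second block of variables. -/
def SDegLE {n q : ℕ} (e : ℕ) (g : MvPowerSeries (Fin n ⊕ Fin q) K) : Prop :=
  ∀ d, MvPowerSeries.coeff (R := K) d g ≠ 0 → sdeg d ≤ e

/-- `g` has order `≥ l` in the second block of variables, i.e. `g ∈ 𝔪_s^l·K[[x,s]]`. -/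
def SOrderGE {n q : ℕ} (l : ℕ) (g : MvPowerSeries (Fin n ⊕ Fin q) K) : Prop :=
  ∀ d, MvPowerSeries.coeff (R := K) d g ≠ 0 → l ≤ sdeg d

/-- a polynomial regarded as a power series. -/
def polyToPS {n : ℕ} (p : MvPolynomial (Fin n) K) : MvPowerSeries (Fin n) K :=
  fun d => MvPolynomial.coeff d p

/-- inclusion `K{x} → K{x,s}`. -/
noncomputable def inclX {n q : ℕ} (f : MvPowerSeries (Fin n) K) :
    MvPowerSeries (Fin n ⊕ Fin q) K :=
  subst (fun i => MvPowerSeries.X (Sum.inl i)) f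

/-- inclusion `K{s} → K{x,s}`. -/
noncomputable def inclS {n q : ℕ} (f : MvPowerSeries (Fin q) K) :
    MvPowerSeries (Fin n ⊕ Fin q) K :=
  subst (fun j => MvPowerSeries.X (Sum.inr j)) f


/-- `I` is a submodule of `K{x}^N` over `K{x}`: a set of convergent power series vectors
containing `0`, closed under addition and under multiplication by convergent scalars. -/
def IsConvSubmodule {K : Type} [Field K] (abv : AbsoluteValue K ℝ) {n N : ℕ}
    (I : Set (Fin N → MvPowerSeries (Fin n) K)) : Prop :=
  (0 ∈ I) ∧ (∀ g ∈ I, IsConvV abv g) ∧ (∀ g ∈ I, ∀ h ∈ I, g + h ∈ I) ∧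
  (∀ a : MvPowerSeries (Fin n) K, IsConv abv a → ∀ g ∈ I, (fun k => a * g k) ∈ I)

/-- `S` is a standard basis of the submodule `I ⊆ K{x}^N`:  `S ⊆ I ∖ {0}` and every
leading monomial of a nonzero element of `I` is divisible by some `LM(S j)`. -/
def IsStdBasis {K : Type} [Field K] (abv : AbsoluteValue K ℝ) {n N m : ℕ}
    (I : Set (Fin N → MvPowerSeries (Fin n) K))
    (S : Fin m → Fin N → MvPowerSeries (Fin n) K) : Prop :=
  (∀ j, S j ∈ I) ∧ (∀ j, S j ≠ 0) ∧
  ∀ g ∈ I, g ≠ 0 → ∀ p : (Fin n →₀ ℕ) × Fin N, IsLM g p →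
    ∃ j, ∃ p' : (Fin n →₀ ℕ) × Fin N, IsLM (S j) p' ∧ MMonDvd p' p

/-- `r` is the remainder (normal form) of the Grauert division of `g` by the ordered
tuple `S` in `K{x}^N`: `g = Σ_j q_j S_j + r` with convergent `q_j`, `r`, and no monomial
of `r` is divisible by any `LM(S j)`. -/
def IsRemainder {K : Type} [Field K] (abv : AbsoluteValue K ℝ) {n N m : ℕ}
    (S : Fin m → Fin N → MvPowerSeries (Fin n) K)
    (g r : Fin N → MvPowerSeries (Fin n) K) : Prop :=
  (∃ q : Fin m → MvPowerSeries (Fin n) K, (∀ j, IsConv abv (q j)) ∧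
    g = (fun k => ∑ j, q j * S j k) + r) ∧
  IsConvV abv r ∧
  ∀ p : (Fin n →₀ ℕ) × Fin N, MvPowerSeries.coeff (R := K) p.1 (r p.2) ≠ 0 →
    ∀ j (p' : (Fin n →₀ ℕ) × Fin N), IsLM (S j) p' → ¬ MMonDvd p' p

/-- the leading module `L(T)`: the `K[x]`-submodule of `K[x]^N` generated by the leading
monomials of the nonzero elements of `T`. -/
noncomputable def leadingModule {K : Type} [Field K] {n N : ℕ}
    (T : Set (Fin N → MvPowerSeries (Fin n) K)) :
    Submodule (MvPolynomial (Fin n) K) (Fin N → MvPolynomial (Fin n) K) :=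
  Submodule.span _ {v | ∃ g ∈ T, ∃ p : (Fin n →₀ ℕ) × Fin N, IsLM g p ∧
    v = Pi.single p.2 ((MvPolynomial.monomial p.1) (1 : K))}

noncomputable instance pilexLO (n : ℕ) : LinearOrder (Lex (Fin n → ℕ)) :=
  have h : WellFoundedLT (Fin n) := inferInstance
  @Pi.Lex.linearOrder (Fin n) (fun _ => ℕ) _ h _

/-- lexicographic key encoding the module monomial ordering -/
noncomputable def mkey {n N : ℕ} (p : (Fin n →₀ ℕ) × Fin N) :
    ℕ ×ₗ ((Lex (Fin n → ℕ)) ×ₗ Fin N) :=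
  toLex (deg p.1, toLex (toLex (⇑p.1), p.2))

lemma mkey_injective {n N : ℕ} : Function.Injective (mkey (n := n) (N := N)) := by
  intro p q h
  unfold mkey at h
  have h1 := toLex.injective h
  have h2 := toLex.injective (congrArg Prod.snd h1)
  have h3 : (⇑p.1 : Fin n → ℕ) = ⇑q.1 := toLex.injective (congrArg Prod.fst h2)
  have h4 := congrArg Prod.snd h2
  exact Prod.ext_iff.mpr ⟨DFunLike.coe_injective h3, h4⟩

lemma mMonGT_iff_mkey_lt {n N : ℕ} (p q : (Fin n →₀ ℕ) × Fin N) :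
    MMonGT p q ↔ mkey p < mkey q := by
  unfold mkey MMonGT MonGT
  rw [Prod.Lex.lt_iff, Prod.Lex.lt_iff]
  have hlex : (toLex (⇑p.1) < toLex (⇑q.1)) ↔
      ∃ l : Fin n, (∀ j : Fin n, j < l → p.1 j = q.1 j) ∧ p.1 l < q.1 l := Iff.rfl
  constructor
  · rintro ((hd | ⟨hd, hl⟩) | ⟨he, hi⟩)
    · exact Or.inl hd
    · exact Or.inr ⟨hd, Or.inl (hlex.mpr hl)⟩
    · exact Or.inr ⟨congrArg deg he, Or.inr ⟨congrArg (fun a : Fin n →₀ ℕ => toLex ⇑a) he, hi⟩⟩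
  · rintro (hd | ⟨hd, hl | ⟨he, hi⟩⟩)
    · exact Or.inl (Or.inl hd)
    · exact Or.inl (Or.inr ⟨hd, hlex.mp hl⟩)
    · exact Or.inr ⟨DFunLike.coe_injective (toLex.injective he), hi⟩

/-- every nonzero vector of power series has a leading monomial -/
lemma exists_isLM {n N : ℕ} (r : Fin N → MvPowerSeries (Fin n) K) (hr : r ≠ 0) :
    ∃ p, IsLM r p := by
  set D : Set ((Fin n →₀ ℕ) × Fin N) :=
    {p | MvPowerSeries.coeff (R := K) p.1 (r p.2) ≠ 0} with hD
  have hne : D.Nonempty := by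
    obtain ⟨k, hk⟩ := Function.ne_iff.mp hr
    obtain ⟨α, hα⟩ : ∃ α, MvPowerSeries.coeff (R := K) α (r k) ≠ 0 := by
      by_contra hc
      push_neg at hc
      exact hk (MvPowerSeries.ext fun d => by simp [hc d])
    exact ⟨(α, k), hα⟩
  have hwf : WellFounded ((· < ·) : (ℕ ×ₗ ((Lex (Fin n → ℕ)) ×ₗ Fin N)) →
      (ℕ ×ₗ ((Lex (Fin n → ℕ)) ×ₗ Fin N)) → Prop) := IsWellFounded.wf
  obtain ⟨m0, ⟨p, hpD, hpm⟩, hmin⟩ := hwf.has_min (mkey '' D) (hne.image _)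
  refine ⟨p, hpD, fun q hq => ?_⟩
  have hqD : q ∈ D := hq
  have hnlt : ¬ mkey q < mkey p := by
    rw [hpm]; exact hmin _ ⟨q, hqD, rfl⟩
  rcases lt_trichotomy (mkey p) (mkey q) with h | h | h
  · exact Or.inr ((mMonGT_iff_mkey_lt p q).mpr h)
  · exact Or.inl (mkey_injective h.symm)
  · exact absurd h hnlt

lemma isConv_neg_one {n : ℕ} (abv : AbsoluteValue K ℝ) :
    IsConv abv (-1 : MvPowerSeries (Fin n) K) := by
  refine ⟨fun _ => 1, fun _ => one_pos, ?_⟩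
  unfold wnorm
  rw [tsum_eq_single (0 : Fin n →₀ ℕ) (fun d hd => by
    rw [map_neg, MvPowerSeries.coeff_one, if_neg hd]
    simp)]
  exact ENNReal.ofReal_lt_top

/-- Lemma 2.8 (1): `f ∈ I` iff `NF(f|S) = 0` for a standard basis `S` of `I`. -/
theorem mem_iff_normalForm_eq_zero {K : Type} [Field K] (abv : AbsoluteValue K ℝ)
    {n N m : ℕ} (I : Set (Fin N → MvPowerSeries (Fin n) K))
    (hI : IsConvSubmodule abv I)
    (S : Fin m → Fin N → MvPowerSeries (Fin n) K) (hS : IsStdBasis abv I S)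
    (f : Fin N → MvPowerSeries (Fin n) K) (hf : IsConvV abv f)
    (r : Fin N → MvPowerSeries (Fin n) K) (hr : IsRemainder abv S f r) :
    f ∈ I ↔ r = 0 := by
  obtain ⟨⟨q, hq, hfq⟩, hrconv, hrnd⟩ := hr
  obtain ⟨h0, hconv, hadd, hsmul⟩ := hI
  set g : Fin N → MvPowerSeries (Fin n) K := fun k => ∑ j, q j * S j k with hgdef
  have hg : g ∈ I := by
    have key : ∀ t : Finset (Fin m), (fun k => ∑ j ∈ t, q j * S j k) ∈ I := by
      intro t
      induction t using Finset.induction with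
      | empty => simpa [← Pi.zero_def] using h0
      | @insert a t ha ih =>
        have h1 := hsmul (q a) (hq a) (S a) (hS.1 a)
        have h2 := hadd _ h1 _ ih
        convert h2 using 1
        funext k
        simp [Finset.sum_insert ha]
    exact key Finset.univ
  constructor
  · -- f ∈ I → r = 0
    intro hfI
    by_contra hrne
    have hnegg : (fun k => (-1 : MvPowerSeries (Fin n) K) * g k) ∈ I :=
      hsmul _ (isConv_neg_one abv) g hg
    have hrI : r ∈ I := by
      have heq : r = f + fun k => (-1 : MvPowerSeries (Fin n) K) * g k := by
        funext k
        have := congrFun hfq k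
        simp only [Pi.add_apply] at this
        rw [Pi.add_apply, this]
        ring
      rw [heq]
      exact hadd f hfI _ hnegg
    obtain ⟨p, hp⟩ := exists_isLM r hrne
    obtain ⟨j, p', hlm, hdvd⟩ := hS.2.2 r hrI hrne p hp
    exact hrnd p hp.1 j p' hlm hdvd
  · -- r = 0 → f ∈ I
    intro hr0
    have : f = g := by rw [hfq, hr0, add_zero]
    rw [this]
    exact hg
end GrauertRVF
end

section
/- Let K be a real valued field. If S ⊂ K[x]^N is a standard basis, for a local degree ordering, of a submodule I ⊂ K[x]^N, then S is a standard basis of the submodule I·K{x}^N of K{x}^N generated by I in K{x}^N. -/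
open MvPowerSeries Finsupp ENNReal

namespace GrauertRVF

variable {K : Type} [Field K]

/-! ### Auxiliary lemmas -/

lemma deg_eq_sum {n : ℕ} (d : Fin n →₀ ℕ) : deg d = ∑ i, d i := by
  classical
  rw [deg, Finsupp.sum_fintype]
  intro i; rfl

lemma deg_add' {n : ℕ} (a b : Fin n →₀ ℕ) : deg (a + b) = deg a + deg b := by
  simp [deg_eq_sum, Finset.sum_add_distrib]

lemma coeff_polyToPS {n : ℕ} (p : MvPolynomial (Fin n) K) (e : Fin n →₀ ℕ) :
    MvPowerSeries.coeff (R := K) e (polyToPS p) = MvPolynomial.coeff e p := rfl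

/-- truncation of a power series at total degree `D`, as a polynomial. -/
noncomputable def truncPoly {n : ℕ} (D : ℕ) (a : MvPowerSeries (Fin n) K) :
    MvPolynomial (Fin n) K :=
  ∑ d ∈ Finset.Iic (Finsupp.equivFunOnFinite.symm fun _ : Fin n => D),
    if deg d ≤ D then MvPolynomial.monomial d (MvPowerSeries.coeff (R := K) d a) else 0

lemma mem_Iic_of_deg_le {n D : ℕ} (e : Fin n →₀ ℕ) (h : deg e ≤ D) :
    e ∈ Finset.Iic (Finsupp.equivFunOnFinite.symm fun _ : Fin n => D) := by
  rw [Finset.mem_Iic, Finsupp.le_def]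
  intro i
  have h1 : e i ≤ deg e := by
    rw [deg_eq_sum]
    exact Finset.single_le_sum (fun j _ => Nat.zero_le _) (Finset.mem_univ i)
  simpa using h1.trans h

lemma coeff_truncPoly {n : ℕ} (D : ℕ) (a : MvPowerSeries (Fin n) K) (e : Fin n →₀ ℕ) :
    MvPolynomial.coeff e (truncPoly D a) =
      if deg e ≤ D then MvPowerSeries.coeff (R := K) e a else 0 := by
  classical
  unfold truncPoly
  rw [MvPolynomial.coeff_sum]
  by_cases he : deg e ≤ D
  · rw [if_pos he, Finset.sum_eq_single_of_mem e (mem_Iic_of_deg_le e he)]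
    · simp [he, MvPolynomial.coeff_monomial]
    · intro d _ hd
      by_cases hdD : deg d ≤ D
      · simp [hdD, MvPolynomial.coeff_monomial, hd]
      · simp [hdD]
  · rw [if_neg he]
    apply Finset.sum_eq_zero
    intro d _
    by_cases hdD : deg d ≤ D
    · rw [if_pos hdD, MvPolynomial.coeff_monomial]
      by_cases hd : d = e
      · subst hd; exact absurd hdD he
      · simp [hd]
    · simp [hdD]

/-- Theorem 2.10: a standard basis `S ⊆ K[x]^N` of a submodule
`I ⊆ K[x]^N` (for a local degree ordering) is a standard basis of `I·K{x}^N`. -/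
theorem polyStdBasis_is_stdBasis {K : Type} [Field K] (abv : AbsoluteValue K ℝ)
    {n N m : ℕ}
    (I : Submodule (MvPolynomial (Fin n) K) (Fin N → MvPolynomial (Fin n) K))
    (S : Fin m → Fin N → MvPolynomial (Fin n) K)
    (hSI : ∀ j, S j ∈ I) (hSne : ∀ j, S j ≠ 0)
    -- `S` is a standard basis of `I`
    (hS : ∀ g ∈ I, g ≠ 0 → ∀ p : (Fin n →₀ ℕ) × Fin N,
      IsLM (fun k => polyToPS (g k)) p →
      ∃ j, ∃ p' : (Fin n →₀ ℕ) × Fin N, IsLM (fun k => polyToPS (S j k)) p' ∧ MMonDvd p' p) :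
    -- then `S` is a standard basis of the submodule `I·K{x}^N` of `K{x}^N`
    (∀ j, (fun k => polyToPS (S j k)) ∈
      {g : Fin N → MvPowerSeries (Fin n) K |
        ∃ (M : ℕ) (a : Fin M → MvPowerSeries (Fin n) K)
          (h : Fin M → (Fin N → MvPolynomial (Fin n) K)),
          (∀ i, IsConv abv (a i)) ∧ (∀ i, h i ∈ I) ∧
          g = fun k => ∑ i, a i * polyToPS (h i k)}) ∧
    (∀ g ∈ {g : Fin N → MvPowerSeries (Fin n) K |
        ∃ (M : ℕ) (a : Fin M → MvPowerSeries (Fin n) K)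
          (h : Fin M → (Fin N → MvPolynomial (Fin n) K)),
          (∀ i, IsConv abv (a i)) ∧ (∀ i, h i ∈ I) ∧
          g = fun k => ∑ i, a i * polyToPS (h i k)},
      g ≠ 0 → ∀ p : (Fin n →₀ ℕ) × Fin N, IsLM g p →
        ∃ j, ∃ p' : (Fin n →₀ ℕ) × Fin N,
          IsLM (fun k => polyToPS (S j k)) p' ∧ MMonDvd p' p) := by
  classical
  constructor
  · -- each `S j` lies in `I·K{x}^N`
    intro j
    refine ⟨1, fun _ => 1, fun _ => S j, ?_, fun _ => hSI j, ?_⟩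
    · intro _
      refine ⟨fun _ => 1, fun _ => one_pos, ?_⟩
      have h1 : wnorm abv (fun _ => (1 : ℝ)) (1 : MvPowerSeries (Fin n) K)
          = ENNReal.ofReal (abv 1 * ∏ i : Fin n, (1 : ℝ) ^ ((0 : Fin n →₀ ℕ) i)) := by
        unfold wnorm
        apply tsum_eq_single (0 : Fin n →₀ ℕ)
        intro d hd
        have hc : MvPowerSeries.coeff (R := K) d (1 : MvPowerSeries (Fin n) K) = 0 := by
          rw [MvPowerSeries.coeff_one, if_neg hd]
        simp [hc]
      rw [h1]
      simp
    · funext k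
      simp
  · -- the standard-basis property over `K{x}`
    rintro g ⟨M, a, h, _, hh, rfl⟩ hgne p hLM
    set D := deg p.1 with hD
    set g' : Fin N → MvPolynomial (Fin n) K :=
      fun k => ∑ i, truncPoly D (a i) * h i k with hg'
    -- `g' ∈ I`
    have hg'I : g' ∈ I := by
      have : g' = ∑ i, truncPoly D (a i) • h i := by
        funext k
        simp [hg', Finset.sum_apply, Pi.smul_apply, smul_eq_mul]
      rw [this]
      exact Submodule.sum_mem _ fun i _ => Submodule.smul_mem _ _ (hh i)
    -- coefficients of `g'` and `g` agree up to degree `D`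
    have key : ∀ (k : Fin N) (e : Fin n →₀ ℕ), deg e ≤ D →
        MvPowerSeries.coeff (R := K) e (polyToPS (g' k)) =
          MvPowerSeries.coeff (R := K) e (∑ i, a i * polyToPS (h i k)) := by
      intro k e he
      rw [coeff_polyToPS, hg', MvPolynomial.coeff_sum, map_sum]
      refine Finset.sum_congr rfl fun i _ => ?_
      rw [MvPolynomial.coeff_mul, MvPowerSeries.coeff_mul]
      refine Finset.sum_congr rfl fun x hx => ?_
      replace hx : x.1 + x.2 = e := Finset.HasAntidiagonal.mem_antidiagonal.mp hx
      have hx1 : deg x.1 ≤ D := by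
        have h2 : deg x.1 + deg x.2 = deg e := by rw [← deg_add', hx]
        omega
      rw [coeff_truncPoly, if_pos hx1, coeff_polyToPS]
    -- `g'` has the same leading monomial `p`
    have hLM' : IsLM (fun k => polyToPS (g' k)) p := by
      constructor
      · rw [key p.2 p.1 le_rfl]
        exact hLM.1
      · intro q hq
        by_cases hdq : deg q.1 ≤ D
        · rw [key q.2 q.1 hdq] at hq
          exact hLM.2 q hq
        · exact Or.inr (Or.inl (Or.inl (lt_of_not_ge hdq)))
    have hg'ne : g' ≠ 0 := by
      intro h0
      apply hLM'.1
      rw [h0]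
      simp [coeff_polyToPS]
    exact hS g' hg'I hg'ne p hLM'
end GrauertRVF
end
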